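/- Let p ≥ 1 and s = p, and for θ ∈ ℝ^p let P_{θ,1} := N(θ, 1_p 1_pᵀ). Define R(ε) := inf_φ { P_{0,1}(φ = 1) + sup_{θ ∈ Θ(p,p,ε)} P_{θ,1}(φ = 0) } over measurable φ : ℝ^p → {0,1}, where Θ(p,p,ε) := {θ ∈ ℝ^p : ‖θ‖ ≥ ε}. Then: (i) for every η ∈ (0,1) there exists C_η > 0 depending only on η such that for all C > C_η, R(C√p) ≤ η; and (ii) for every η ∈ (0,1) there exists c_η > 0 depending only on η such that for all 0 < c < c_η, R(c√p) ≥ 1 − η. (That is, the squared minimax separation rate at γ = 1, s = p is of order p.) -/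

import Mathlib

open MeasureTheory ProbabilityTheory Matrix Finset
open scoped Classical

noncomputable section

/-- The standard Gaussian measure on `Fin p → ℝ`. -/
def stdGaussianPi (p : ℕ) : Measure (Fin p → ℝ) :=
  Measure.pi fun _ => gaussianReal 0 1

/-- The Gaussian measure `N(θ, S)` on `ℝ^p` with mean `θ` and positive semidefinite
covariance matrix `S`, realized as the pushforward of the standard Gaussian under
`x ↦ θ + √S x` (junk value `0` if `S` is not positive semidefinite). -/
def gaussianPi {p : ℕ} (θ : Fin p → ℝ) (S : Matrix (Fin p) (Fin p) ℝ) :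
    Measure (Fin p → ℝ) :=
  if h : S.PosSemidef then (stdGaussianPi p).map (fun x => θ +
    ((h.1.eigenvectorUnitary : Matrix (Fin p) (Fin p) ℝ) *
      diagonal (fun i => Real.sqrt (h.1.eigenvalues i)) *
      star (h.1.eigenvectorUnitary : Matrix (Fin p) (Fin p) ℝ)).mulVec x) else 0

/-- `‖θ‖₀`, the number of nonzero coordinates. -/
def sparsity {p : ℕ} (θ : Fin p → ℝ) : ℕ := Set.ncard {i | θ i ≠ 0}

/-- The Euclidean norm on `Fin p → ℝ`. -/
def l2norm {p : ℕ} (θ : Fin p → ℝ) : ℝ := Real.sqrt (∑ i, θ i ^ 2)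

section Aux
open Real
open scoped NNReal ENNReal

lemma gauss_pdf_integral {v w : ℝ≥0} (hv : v ≠ 0) (hw : w ≠ 0) (y : ℝ) :
    ∫ x : ℝ, gaussianPDFReal 0 v x * gaussianPDFReal x w y = gaussianPDFReal 0 (v + w) y := by
  have ha : (0:ℝ) < v := by exact_mod_cast pos_iff_ne_zero.2 hv
  have hb : (0:ℝ) < w := by exact_mod_cast pos_iff_ne_zero.2 hw
  set a : ℝ := (v:ℝ) with hav
  set b : ℝ := (w:ℝ) with hbv
  have hpi := Real.pi_pos
  set A : ℝ := (a + b) / (2 * a * b) with hA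
  have hApos : 0 < A := by positivity
  set c : ℝ := a * y / (a + b) with hc
  have ha' : a ≠ 0 := ne_of_gt ha
  have hb' : b ≠ 0 := ne_of_gt hb
  have hab' : a + b ≠ 0 := by positivity
  have hfun : ∀ x : ℝ, gaussianPDFReal 0 v x * gaussianPDFReal x w y
      = (gaussianPDFReal 0 (v + w) y * (Real.sqrt (π / A))⁻¹) * Real.exp (-A * (x - c) ^ 2) := by
    intro x
    simp only [gaussianPDFReal, NNReal.coe_add, ← hav, ← hbv]
    have hexp : - (x - 0) ^ 2 / (2 * a) + - (y - x) ^ 2 / (2 * b)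
        = - (y - 0) ^ 2 / (2 * (a + b)) + (-A * (x - c) ^ 2) := by
      rw [hA, hc]
      field_simp
      ring
    have hconst : (Real.sqrt (2 * π * a))⁻¹ * (Real.sqrt (2 * π * b))⁻¹
        = (Real.sqrt (2 * π * (a + b)))⁻¹ * (Real.sqrt (π / A))⁻¹ := by
      rw [← Real.sqrt_inv, ← Real.sqrt_inv, ← Real.sqrt_inv, ← Real.sqrt_inv,
        ← Real.sqrt_mul (by positivity), ← Real.sqrt_mul (by positivity)]
      congr 1
      rw [hA]
      field_simp
    calc (Real.sqrt (2 * π * a))⁻¹ * Real.exp (- (x - 0) ^ 2 / (2 * a))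
          * ((Real.sqrt (2 * π * b))⁻¹ * Real.exp (- (y - x) ^ 2 / (2 * b)))
        = ((Real.sqrt (2 * π * a))⁻¹ * (Real.sqrt (2 * π * b))⁻¹)
          * Real.exp (- (x - 0) ^ 2 / (2 * a) + - (y - x) ^ 2 / (2 * b)) := by
          rw [Real.exp_add]; ring
      _ = _ := by
          rw [hconst, hexp, Real.exp_add]; ring
  rw [integral_congr_ae (Filter.Eventually.of_forall hfun)]
  rw [MeasureTheory.integral_const_mul]
  have hint : ∫ x : ℝ, Real.exp (-A * (x - c) ^ 2) = Real.sqrt (π / A) := by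
    rw [show (fun x : ℝ => Real.exp (-A * (x - c) ^ 2))
        = fun x => (fun t => Real.exp (-A * t ^ 2)) (x - c) from rfl]
    rw [integral_sub_right_eq_self (fun t => Real.exp (-A * t ^ 2)) c]
    exact integral_gaussian A
  rw [hint, mul_assoc, inv_mul_cancel₀ (by positivity : Real.sqrt (π / A) ≠ 0), mul_one]

lemma gaussian_conv {v w : ℝ≥0} (hv : v ≠ 0) (hw : w ≠ 0) :
    ((gaussianReal 0 v).prod (gaussianReal 0 w)).map (fun q : ℝ × ℝ => q.1 + q.2)
      = gaussianReal 0 (v + w) := by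
  have hvw : v + w ≠ 0 := fun h => hv (by simpa using (add_eq_zero.mp h).1)
  have hw2 : (0:ℝ) < 2 * π * w := by
    have := Real.pi_pos
    have : (0:ℝ) < w := by exact_mod_cast pos_iff_ne_zero.2 hw
    positivity
  have hjoint : Measurable fun q : ℝ × ℝ => gaussianPDF q.1 w q.2 := by
    have : Continuous fun q : ℝ × ℝ =>
        (Real.sqrt (2 * π * w))⁻¹ * Real.exp (-(q.2 - q.1) ^ 2 / (2 * w)) := by fun_prop
    exact this.measurable.ennreal_ofReal
  ext s hs
  rw [Measure.map_apply measurable_add hs, Measure.prod_apply (measurable_add hs)]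
  have h1 : ∀ x : ℝ, (gaussianReal 0 w) (Prod.mk x ⁻¹' ((fun q : ℝ × ℝ => q.1 + q.2) ⁻¹' s))
      = ∫⁻ y in s, gaussianPDF x w y := by
    intro x
    have hpre : (Prod.mk x ⁻¹' ((fun q : ℝ × ℝ => q.1 + q.2) ⁻¹' s)) = (fun y => x + y) ⁻¹' s := rfl
    rw [hpre, ← Measure.map_apply (measurable_const_add x) hs, gaussianReal_map_const_add x,
      zero_add, gaussianReal_apply x hw s]
  simp_rw [h1]
  have hg : Measurable fun x : ℝ => ∫⁻ y in s, gaussianPDF x w y := by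
    exact Measurable.lintegral_prod_right' (f := fun q : ℝ × ℝ => gaussianPDF q.1 w q.2)
      (ν := volume.restrict s) hjoint
  rw [gaussianReal_of_var_ne_zero 0 hv,
    lintegral_withDensity_eq_lintegral_mul _ (measurable_gaussianPDF 0 v) hg]
  simp only [Pi.mul_apply]
  have h2 : ∀ x : ℝ, gaussianPDF 0 v x * ∫⁻ y in s, gaussianPDF x w y
      = ∫⁻ y in s, gaussianPDF 0 v x * gaussianPDF x w y := by
    intro x
    rw [lintegral_const_mul _ (measurable_gaussianPDF x w)]
  simp_rw [h2]
  rw [lintegral_lintegral_swap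
    (((measurable_gaussianPDF 0 v).comp measurable_fst).mul hjoint).aemeasurable]
  have key : ∀ y : ℝ, ∫⁻ x, gaussianPDF 0 v x * gaussianPDF x w y = gaussianPDF 0 (v + w) y := by
    intro y
    have hInt : Integrable (fun x => gaussianPDFReal 0 v x * gaussianPDFReal x w y) := by
      refine Integrable.mono' ((integrable_gaussianPDFReal 0 v).const_mul
        ((Real.sqrt (2 * π * w))⁻¹)) ?_ ?_
      · have : Continuous fun x : ℝ =>
            gaussianPDFReal 0 v x * ((Real.sqrt (2 * π * w))⁻¹
              * Real.exp (-(y - x) ^ 2 / (2 * w))) := by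
          unfold gaussianPDFReal; fun_prop
        exact this.aestronglyMeasurable
      · refine Filter.Eventually.of_forall fun x => ?_
        rw [Real.norm_eq_abs, abs_of_nonneg
          (mul_nonneg (gaussianPDFReal_nonneg _ _ _) (gaussianPDFReal_nonneg _ _ _))]
        rw [mul_comm ((Real.sqrt (2 * π * w))⁻¹) _]
        refine mul_le_mul_of_nonneg_left ?_ (gaussianPDFReal_nonneg _ _ _)
        unfold gaussianPDFReal
        refine mul_le_of_le_one_right (by positivity) ?_
        refine Real.exp_le_one_iff.mpr (div_nonpos_of_nonpos_of_nonneg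
          (neg_nonpos.mpr (sq_nonneg _)) (by positivity))
    have hnn : 0 ≤ᶠ[ae volume] fun x => gaussianPDFReal 0 v x * gaussianPDFReal x w y :=
      Filter.Eventually.of_forall fun x =>
        mul_nonneg (gaussianPDFReal_nonneg _ _ _) (gaussianPDFReal_nonneg _ _ _)
    calc ∫⁻ x, gaussianPDF 0 v x * gaussianPDF x w y
        = ∫⁻ x, ENNReal.ofReal (gaussianPDFReal 0 v x * gaussianPDFReal x w y) := by
          simp_rw [gaussianPDF, ← ENNReal.ofReal_mul (gaussianPDFReal_nonneg 0 v _)]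
      _ = ENNReal.ofReal (∫ x, gaussianPDFReal 0 v x * gaussianPDFReal x w y) :=
          (ofReal_integral_eq_lintegral_ofReal hInt hnn).symm
      _ = gaussianPDF 0 (v + w) y := by rw [gauss_pdf_integral hv hw y]; rfl
  simp_rw [key]
  exact (gaussianReal_apply 0 hvw s).symm

lemma map_sum_stdGaussian (n : ℕ) :
    (stdGaussianPi n).map (fun x => ∑ i, x i) = gaussianReal 0 (n : ℝ≥0) := by
  induction n with
  | zero =>
    have h0 : (fun x : Fin 0 → ℝ => ∑ i, x i) = fun _ => (0:ℝ) := by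
      funext x; simp
    rw [h0, Measure.map_const]
    simp [stdGaussianPi]
  | succ n ih =>
    have hmeas_sum : Measurable fun y : Fin n → ℝ => ∑ i, y i :=
      Finset.measurable_sum _ fun i _ => measurable_pi_apply i
    have hmeas_g : Measurable fun q : ℝ × (Fin n → ℝ) => q.1 + ∑ i, q.2 i :=
      measurable_fst.add (hmeas_sum.comp measurable_snd)
    have hmp := measurePreserving_piFinSuccAbove (fun _ : Fin (n+1) => gaussianReal (0:ℝ) 1) 0
    have hsum : (fun x : Fin (n+1) → ℝ => ∑ i, x i)
        = (fun q : ℝ × (Fin n → ℝ) => q.1 + ∑ i, q.2 i)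
          ∘ (MeasurableEquiv.piFinSuccAbove (fun _ : Fin (n+1) => ℝ) 0) := by
      funext x
      simp [MeasurableEquiv.piFinSuccAbove, Fin.sum_univ_succ, Fin.tail]
    rw [stdGaussianPi, hsum, ← Measure.map_map hmeas_g (MeasurableEquiv.measurable _),
      hmp.map_eq]
    have hdecomp : (fun q : ℝ × (Fin n → ℝ) => q.1 + ∑ i, q.2 i)
        = (fun r : ℝ × ℝ => r.1 + r.2) ∘ Prod.map id (fun y : Fin n → ℝ => ∑ i, y i) := rfl
    rw [hdecomp, ← Measure.map_map measurable_add (measurable_id.prodMap hmeas_sum),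
      ← Measure.map_prod_map _ _ measurable_id hmeas_sum, Measure.map_id]
    rw [show (Measure.pi fun _ : Fin n => gaussianReal (0:ℝ) 1) = stdGaussianPi n from rfl, ih]
    rcases eq_or_ne n 0 with hn | hn
    · subst hn
      simp only [Nat.cast_zero, gaussianReal_zero_var]
      have h0m : Measurable fun x : ℝ => (x, (0:ℝ)) := measurable_id.prodMk measurable_const
      rw [Measure.prod_dirac, Measure.map_map measurable_add h0m]
      simp [Function.comp_def]
    · rw [gaussian_conv one_ne_zero (by exact_mod_cast hn)]
      congr 1
      push_cast
      ring

lemma const_posSemidef (p : ℕ) (r : ℝ) (hr : 0 ≤ r) :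
    (Matrix.of fun _ _ : Fin p => r).PosSemidef := by
  refine Matrix.PosSemidef.of_dotProduct_mulVec_nonneg ?_ ?_
  · ext i j
    simp [Matrix.conjTranspose_apply]
  · intro x
    have h : (star x) ⬝ᵥ (Matrix.of fun _ _ : Fin p => r).mulVec x = r * (∑ i, x i) ^ 2 := by
      simp only [star_trivial, Matrix.mulVec, dotProduct, Matrix.of_apply, ← Finset.mul_sum]
      rw [← Finset.sum_mul]
      ring
    rw [h]
    positivity

lemma gaussianPi_ones (p : ℕ) (hp : 1 ≤ p) (θ : Fin p → ℝ) :
    gaussianPi θ (Matrix.of fun _ _ => (1:ℝ))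
      = (gaussianReal 0 1).map (fun t => θ + fun _ => t) := by
  have hp0 : (0:ℝ) < p := by exact_mod_cast hp
  have hsp : (0:ℝ) < Real.sqrt p := Real.sqrt_pos.2 hp0
  have hS : (Matrix.of fun _ _ : Fin p => (1:ℝ)).PosSemidef := const_posSemidef p 1 zero_le_one
  have hB : (Matrix.of fun _ _ : Fin p => (Real.sqrt p)⁻¹).PosSemidef :=
    const_posSemidef p _ (by positivity)
  have hB2 : (Matrix.of fun _ _ : Fin p => (Real.sqrt p)⁻¹) ^ 2
      = Matrix.of fun _ _ : Fin p => (1:ℝ) := by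
    ext i j
    rw [pow_two]
    simp only [Matrix.mul_apply, Matrix.of_apply, Finset.sum_const, Finset.card_univ,
      Fintype.card_fin, nsmul_eq_mul]
    rw [← Real.sqrt_inv, Real.mul_self_sqrt (by positivity)]
    field_simp
  have hsqrt : ((hS.1.eigenvectorUnitary : Matrix (Fin p) (Fin p) ℝ) *
      diagonal (fun i => Real.sqrt (hS.1.eigenvalues i)) *
      star (hS.1.eigenvectorUnitary : Matrix (Fin p) (Fin p) ℝ)) = Matrix.of fun _ _ : Fin p => (Real.sqrt p)⁻¹ := by
    have hSS : (Matrix.of fun _ _ : Fin p => (1:ℝ)) * (Matrix.of fun _ _ : Fin p => (1:ℝ))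
        = (p:ℝ) • Matrix.of fun _ _ : Fin p => (1:ℝ) := by
      ext a b; simp [Matrix.mul_apply]
    have hev : ∀ i, Real.sqrt (hS.1.eigenvalues i) = (Real.sqrt p)⁻¹ * hS.1.eigenvalues i := by
      intro i
      have hv := hS.1.mulVec_eigenvectorBasis i
      have e1 : (Matrix.of fun _ _ : Fin p => (1:ℝ)) *ᵥ ((Matrix.of fun _ _ : Fin p => (1:ℝ)) *ᵥ
          ⇑(hS.1.eigenvectorBasis i)) = (hS.1.eigenvalues i * hS.1.eigenvalues i) •
          ⇑(hS.1.eigenvectorBasis i) := by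
        rw [hv, Matrix.mulVec_smul, hv, smul_smul]
      have e2 : (Matrix.of fun _ _ : Fin p => (1:ℝ)) *ᵥ ((Matrix.of fun _ _ : Fin p => (1:ℝ)) *ᵥ
          ⇑(hS.1.eigenvectorBasis i)) = ((p:ℝ) * hS.1.eigenvalues i) •
          ⇑(hS.1.eigenvectorBasis i) := by
        rw [Matrix.mulVec_mulVec, hSS, Matrix.smul_mulVec, hv, smul_smul]
      have hvne : ⇑(hS.1.eigenvectorBasis i) ≠ 0 := by
        intro h0
        apply (hS.1.eigenvectorBasis.orthonormal.ne_zero i)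
        ext j
        simpa using congrFun h0 j
      have hl : hS.1.eigenvalues i * hS.1.eigenvalues i = (p:ℝ) * hS.1.eigenvalues i :=
        smul_left_injective ℝ hvne (e1.symm.trans e2)
      have hl2 : hS.1.eigenvalues i * (hS.1.eigenvalues i - p) = 0 := by linarith
      rcases mul_eq_zero.mp hl2 with h0 | h0
      · rw [h0]; simp
      · rw [show hS.1.eigenvalues i = p by linarith, eq_inv_mul_iff_mul_eq₀ hsp.ne',
          Real.mul_self_sqrt hp0.le]
    have hd : diagonal (fun i => Real.sqrt (hS.1.eigenvalues i))
        = (Real.sqrt p)⁻¹ • diagonal (RCLike.ofReal ∘ hS.1.eigenvalues) := by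
      ext a b
      by_cases hab : a = b
      · subst hab; simp [hev]
      · simp [hab]
    have hst := hS.1.spectral_theorem
    rw [Unitary.conjStarAlgAut_apply] at hst
    rw [hd, Matrix.mul_smul, Matrix.smul_mul, ← hst]
    ext a b; simp
  have hLm : Measurable fun x : Fin p → ℝ => (Real.sqrt p)⁻¹ * ∑ j, x j :=
    (Finset.measurable_sum _ fun i _ => measurable_pi_apply i).const_mul _
  have hTm : Measurable fun t : ℝ => θ + fun _ : Fin p => t :=
    measurable_pi_lambda _ fun a => measurable_const.add measurable_id
  have hcomp : (fun x : Fin p → ℝ => θ + ((hS.1.eigenvectorUnitary : Matrix (Fin p) (Fin p) ℝ) *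
      diagonal (fun i => Real.sqrt (hS.1.eigenvalues i)) *
      star (hS.1.eigenvectorUnitary : Matrix (Fin p) (Fin p) ℝ)).mulVec x)
      = (fun t : ℝ => θ + fun _ : Fin p => t) ∘ (fun x => (Real.sqrt p)⁻¹ * ∑ j, x j) := by
    funext x
    simp only [Function.comp_apply, hsqrt]
    congr 1
    funext i
    simp [Matrix.mulVec, dotProduct, ← Finset.mul_sum]
  rw [gaussianPi, dif_pos hS, hcomp, ← Measure.map_map hTm hLm]
  have hLmap : (stdGaussianPi p).map (fun x : Fin p → ℝ => (Real.sqrt p)⁻¹ * ∑ j, x j)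
      = gaussianReal 0 1 := by
    rw [show (fun x : Fin p → ℝ => (Real.sqrt p)⁻¹ * ∑ j, x j)
        = (fun t : ℝ => (Real.sqrt p)⁻¹ * t) ∘ (fun x : Fin p → ℝ => ∑ j, x j) from rfl,
      ← Measure.map_map (measurable_const_mul _)
        (Finset.measurable_sum _ fun i _ => measurable_pi_apply i),
      map_sum_stdGaussian p, gaussianReal_map_const_mul]
    norm_num
    congr 1
    ext
    push_cast
    field_simp
  rw [hLmap]

lemma gauss_comp {m₁ m₂ : ℝ} {E : Set ℝ} (hE : MeasurableSet E)
    (h : ∀ x ∈ E, (x - m₁) ^ 2 ≤ (x - m₂) ^ 2) :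
    gaussianReal m₂ 1 E ≤ gaussianReal m₁ 1 E := by
  rw [gaussianReal_apply _ one_ne_zero, gaussianReal_apply _ one_ne_zero]
  refine setLIntegral_mono (measurable_gaussianPDF _ _) fun x hx => ?_
  unfold gaussianPDF gaussianPDFReal
  refine ENNReal.ofReal_le_ofReal ?_
  refine mul_le_mul_of_nonneg_left (Real.exp_le_exp.mpr ?_) (by positivity)
  have := h x hx
  simp only [NNReal.coe_one]
  linarith

lemma gauss_shift_le (a : ℝ) (ha : 0 < a) {D : Set ℝ} (hD : MeasurableSet D) :
    (gaussianReal a 1) D ≤ gaussianReal 0 1 D + ENNReal.ofReal (a / 2) := by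
  set ν := gaussianReal 0 1 with hν
  set I := Set.Ici (a / 2) with hI
  have hIm : MeasurableSet I := measurableSet_Ici
  have hsplit : gaussianReal a 1 D = gaussianReal a 1 (D ∩ I) + gaussianReal a 1 (D \ I) :=
    (measure_inter_add_diff D hIm).symm
  have hb1 : gaussianReal a 1 (D \ I) ≤ ν (D \ I) := by
    refine gauss_comp (hD.diff hIm) fun x hx => ?_
    have hx2 : x < a / 2 := not_le.mp hx.2
    nlinarith
  have hb2 : ν (I \ D) ≤ gaussianReal a 1 (I \ D) := by
    refine gauss_comp (hIm.diff hD) fun x hx => ?_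
    have hx2 : a / 2 ≤ x := hx.1
    nlinarith
  have hkey : gaussianReal a 1 I = ν (Set.Ico (-(a/2)) (a/2)) + ν I := by
    have hmap : gaussianReal a 1 I = ν (Set.Ici (-(a/2))) := by
      have := gaussianReal_map_add_const (μ := 0) (v := 1) a
      rw [zero_add] at this
      rw [← this, Measure.map_apply (measurable_add_const a) hIm]
      congr 1
      ext t
      simp only [Set.mem_preimage, hI, Set.mem_Ici]
      constructor <;> intro <;> linarith
    rw [hmap, ← Set.Ico_union_Ici_eq_Ici (by linarith : -(a/2) ≤ a/2),
      measure_union ?_ hIm]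
    exact Set.disjoint_left.mpr fun x hx1 hx2 => absurd hx2 (not_le.2 hx1.2)
  have hIsplit : ν I = ν (D ∩ I) + ν (I \ D) := by
    rw [← measure_inter_add_diff I hD, Set.inter_comm]
  have haI : gaussianReal a 1 I = gaussianReal a 1 (D ∩ I) + gaussianReal a 1 (I \ D) := by
    rw [← measure_inter_add_diff I hD, Set.inter_comm]
  have hIco : ν (Set.Ico (-(a/2)) (a/2)) ≤ ENNReal.ofReal (a / 2) := by
    rw [hν, gaussianReal_apply _ one_ne_zero]
    calc ∫⁻ x in Set.Ico (-(a/2)) (a/2), gaussianPDF 0 1 x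
        ≤ ∫⁻ _ in Set.Ico (-(a/2)) (a/2), ENNReal.ofReal (1/2) := by
          refine setLIntegral_mono measurable_const fun x _ => ?_
          unfold gaussianPDF gaussianPDFReal
          refine ENNReal.ofReal_le_ofReal ?_
          have h2 : (2:ℝ) ≤ Real.sqrt (2 * π * (1:ℝ≥0)) := by
            simp only [NNReal.coe_one, mul_one]
            nlinarith [Real.sq_sqrt (le_of_lt (by positivity : (0:ℝ) < 2 * π)),
              Real.sqrt_nonneg (2 * π), Real.pi_gt_three]
          have h1 : Real.exp (-(x - 0)^2 / (2 * (1:ℝ≥0))) ≤ 1 := by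
            refine Real.exp_le_one_iff.mpr (div_nonpos_of_nonpos_of_nonneg
              (neg_nonpos.mpr (sq_nonneg _)) (by positivity))
          have hinv : (Real.sqrt (2 * π * (1:ℝ≥0)))⁻¹ ≤ 1/2 := by
            rw [show (1:ℝ)/2 = 2⁻¹ by norm_num]
            exact inv_anti₀ (by norm_num) h2
          calc (Real.sqrt (2 * π * (1:ℝ≥0)))⁻¹ * Real.exp (-(x - 0)^2 / (2 * (1:ℝ≥0)))
              ≤ (1/2) * 1 := mul_le_mul hinv h1 (Real.exp_nonneg _) (by norm_num)
            _ = 1/2 := by norm_num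
      _ = ENNReal.ofReal (1/2) * volume (Set.Ico (-(a/2)) (a/2)) := by
          rw [setLIntegral_const]
      _ = ENNReal.ofReal (a / 2) := by
          rw [Real.volume_Ico, ← ENNReal.ofReal_mul (by norm_num)]
          congr 1
          ring
  have hcancel : gaussianReal a 1 (D ∩ I) ≤ ν (Set.Ico (-(a/2)) (a/2)) + ν (D ∩ I) := by
    have h1 : gaussianReal a 1 (D ∩ I) + ν (I \ D)
        ≤ (ν (Set.Ico (-(a/2)) (a/2)) + ν (D ∩ I)) + ν (I \ D) := by
      calc gaussianReal a 1 (D ∩ I) + ν (I \ D)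
          ≤ gaussianReal a 1 (D ∩ I) + gaussianReal a 1 (I \ D) := add_le_add le_rfl hb2
        _ = gaussianReal a 1 I := haI.symm
        _ = ν (Set.Ico (-(a/2)) (a/2)) + ν I := hkey
        _ = (ν (Set.Ico (-(a/2)) (a/2)) + ν (D ∩ I)) + ν (I \ D) := by
            rw [hIsplit, add_assoc]
    exact (ENNReal.add_le_add_iff_right (measure_ne_top _ _)).mp h1
  calc gaussianReal a 1 D = gaussianReal a 1 (D ∩ I) + gaussianReal a 1 (D \ I) := hsplit
    _ ≤ (ν (Set.Ico (-(a/2)) (a/2)) + ν (D ∩ I)) + ν (D \ I) :=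
        add_le_add hcancel hb1
    _ = ν (Set.Ico (-(a/2)) (a/2)) + (ν (D ∩ I) + ν (D \ I)) := by rw [add_assoc]
    _ = ν (Set.Ico (-(a/2)) (a/2)) + ν D := by rw [measure_inter_add_diff D hIm]
    _ ≤ ENNReal.ofReal (a / 2) + ν D := add_le_add hIco le_rfl
    _ = ν D + ENNReal.ofReal (a / 2) := add_comm _ _

lemma gauss_tail (η : ℝ) (hη : 0 < η) :
    ∃ M : ℝ, 0 < M ∧ ((gaussianReal 0 1) {t : ℝ | M ≤ |t|}).toReal ≤ η := by
  set ν := gaussianReal 0 1 with hν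
  have hA : ∀ n : ℕ, MeasurableSet {t : ℝ | (n:ℝ) ≤ |t|} := fun n =>
    (isClosed_le continuous_const continuous_abs).measurableSet
  have hanti : Antitone fun n : ℕ => {t : ℝ | (n:ℝ) ≤ |t|} := by
    intro m n hmn t ht
    exact le_trans (by exact_mod_cast hmn : (m:ℝ) ≤ n) ht
  have hempty : ⋂ n : ℕ, {t : ℝ | (n:ℝ) ≤ |t|} = ∅ := by
    ext t
    simp only [Set.mem_iInter, Set.mem_setOf_eq, Set.mem_empty_iff_false, iff_false, not_forall,
      not_le]
    obtain ⟨n, hn⟩ := exists_nat_gt |t|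
    exact ⟨n, hn⟩
  have htend := tendsto_measure_iInter_atTop (μ := ν)
    (fun n => (hA n).nullMeasurableSet) hanti ⟨0, measure_ne_top _ _⟩
  rw [hempty, measure_empty] at htend
  have hev : ∀ᶠ n : ℕ in Filter.atTop, ν {t : ℝ | (n:ℝ) ≤ |t|} < ENNReal.ofReal η :=
    htend.eventually_lt_const (by simp [hη])
  obtain ⟨n, hn⟩ := hev.exists
  refine ⟨(n:ℝ) + 1, by positivity, ?_⟩
  have hsub : ν {t : ℝ | ((n:ℝ) + 1) ≤ |t|} < ENNReal.ofReal η :=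
    lt_of_le_of_lt (measure_mono fun t ht => by simp only [Set.mem_setOf_eq] at *; linarith) hn
  exact le_of_lt ((ENNReal.lt_ofReal_iff_toReal_lt (measure_ne_top _ _)).mp hsub)

end Aux

/-- Minimax testing risk: infimum over measurable tests `φ : ℝ^p → {0,1}` of the
type I error under `P 0` plus the worst-case type II error over the alternative `T`. -/
def minimaxRisk {p : ℕ} (P : (Fin p → ℝ) → Measure (Fin p → ℝ))
    (T : Set (Fin p → ℝ)) : ℝ :=
  ⨅ φ : {f : (Fin p → ℝ) → Bool // Measurable f},
    ((P 0 {x | φ.1 x = true}).toReal + ⨆ θ ∈ T, (P θ {x | φ.1 x = false}).toReal)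


section Main
open Real
open scoped NNReal ENNReal

lemma upperB (p : ℕ) (hp : 1 ≤ p) (η : ℝ) (hη0 : 0 < η) (hη1 : η < 1) :
    ∃ Cη : ℝ, 0 < Cη ∧ ∀ C : ℝ, Cη < C →
      minimaxRisk (fun θ : Fin p → ℝ => gaussianPi θ (Matrix.of fun _ _ => (1:ℝ)))
        {θ | C * Real.sqrt p ≤ l2norm θ} ≤ η := by
  haveI : NeZero p := ⟨by omega⟩
  have hsp : (0:ℝ) < Real.sqrt p := Real.sqrt_pos.2 (by exact_mod_cast hp)
  have hT : ∀ θ : Fin p → ℝ, Measurable fun t : ℝ => θ + fun _ : Fin p => t :=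
    fun θ => measurable_pi_lambda _ fun a => measurable_const.add measurable_id
  set P : (Fin p → ℝ) → Measure (Fin p → ℝ) :=
    fun θ => gaussianPi θ (Matrix.of fun _ _ => (1:ℝ)) with hPdef
  have hP : ∀ θ, P θ = (gaussianReal 0 1).map (fun t => θ + fun _ => t) :=
    fun θ => gaussianPi_ones p hp θ
  have happly : ∀ (θ : Fin p → ℝ) (s : Set (Fin p → ℝ)), MeasurableSet s →
      P θ s = gaussianReal 0 1 ((fun t : ℝ => θ + fun _ : Fin p => t) ⁻¹' s) := by
    intro θ s hs
    rw [hP θ, Measure.map_apply (hT θ) hs]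
  obtain ⟨M, hM0, hMtail⟩ := gauss_tail (η/2) (by linarith)
  refine ⟨2*M + 1, by positivity, fun C hC => ?_⟩
  set E : Set (Fin p → ℝ) := {x | ∃ i, x i ≠ x 0} ∪ {x | M < |x 0|} with hEdef
  have hE : MeasurableSet E := by
    refine MeasurableSet.union ?_ ?_
    · have h : {x : Fin p → ℝ | ∃ i, x i ≠ x 0} = ⋃ i, {x | x i ≠ x 0} := by
        ext x; simp
      rw [h]
      exact MeasurableSet.iUnion fun i =>
        (measurableSet_eq_fun (measurable_pi_apply i) (measurable_pi_apply 0)).compl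
    · exact measurableSet_lt measurable_const (measurable_pi_apply 0).abs
  set φ : (Fin p → ℝ) → Bool := fun x => decide (x ∈ E) with hφdef
  have hφ : Measurable φ := by
    refine measurable_to_countable' fun b => ?_
    cases b
    · have : φ ⁻¹' {false} = Eᶜ := by ext x; simp [hφdef]
      rw [this]; exact hE.compl
    · have : φ ⁻¹' {true} = E := by ext x; simp [hφdef]
      rw [this]; exact hE
  have hEtrue : {x | φ x = true} = E := by ext x; simp [hφdef]
  have hEfalse : {x | φ x = false} = Eᶜ := by ext x; simp [hφdef]
  have hbdd : BddBelow (Set.range fun ψ : {f : (Fin p → ℝ) → Bool // Measurable f} =>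
      (P 0 {x | ψ.1 x = true}).toReal + ⨆ θ ∈ {θ : Fin p → ℝ | C * Real.sqrt p ≤ l2norm θ},
        (P θ {x | ψ.1 x = false}).toReal) := by
    refine ⟨0, ?_⟩
    rintro r ⟨ψ, rfl⟩
    exact add_nonneg ENNReal.toReal_nonneg
      (Real.iSup_nonneg fun θ => Real.iSup_nonneg fun _ => ENNReal.toReal_nonneg)
  refine le_trans (ciInf_le hbdd ⟨φ, hφ⟩) ?_
  have h1 : (P 0 {x | φ x = true}).toReal ≤ η/2 := by
    rw [hEtrue, happly 0 E hE]
    have hsub : (fun t : ℝ => (0 : Fin p → ℝ) + fun _ => t) ⁻¹' E ⊆ {t : ℝ | M ≤ |t|} := by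
      intro t ht
      simp only [hEdef, Set.mem_preimage, Set.mem_union, Set.mem_setOf_eq, Pi.add_apply,
        Pi.zero_apply, zero_add, ne_eq, not_true_eq_false, exists_false, false_or] at ht
      exact le_of_lt ht
    exact le_trans (ENNReal.toReal_mono (measure_ne_top _ _) (measure_mono hsub)) hMtail
  have h2 : ∀ θ : Fin p → ℝ, C * Real.sqrt p ≤ l2norm θ →
      (P θ {x | φ x = false}).toReal ≤ η/2 := by
    intro θ hθ
    rw [hEfalse, happly θ Eᶜ hE.compl]
    by_cases hconst : ∀ i, θ i = θ 0
    · have hnorm : l2norm θ = |θ 0| * Real.sqrt p := by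
        unfold l2norm
        have hsum : ∑ i, θ i ^ 2 = (p : ℝ) * θ 0 ^ 2 := by
          calc ∑ i, θ i ^ 2 = ∑ _i : Fin p, θ 0 ^ 2 :=
                Finset.sum_congr rfl fun i _ => by rw [hconst i]
            _ = (p : ℝ) * θ 0 ^ 2 := by
                simp [Finset.sum_const, Finset.card_univ, mul_comm]
        rw [hsum, mul_comm, Real.sqrt_mul (sq_nonneg _), Real.sqrt_sq_eq_abs]
      have haC : C ≤ |θ 0| := by
        rw [hnorm] at hθ
        exact le_of_mul_le_mul_right hθ hsp
      have hsub : (fun t : ℝ => θ + fun _ => t) ⁻¹' Eᶜ ⊆ {t : ℝ | M ≤ |t|} := by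
        intro t ht
        simp only [hEdef, Set.mem_preimage, Set.mem_compl_iff, Set.mem_union, Set.mem_setOf_eq,
          Pi.add_apply, ne_eq, not_or, not_exists, not_not, not_lt] at ht
        obtain ⟨-, hle⟩ := ht
        have habs : |θ 0| ≤ |θ 0 + t| + |t| := by
          calc |θ 0| = |(θ 0 + t) + (-t)| := by ring_nf
            _ ≤ |θ 0 + t| + |(-t)| := abs_add_le _ _
            _ = |θ 0 + t| + |t| := by rw [abs_neg]
        simp only [Set.mem_setOf_eq]
        linarith
      exact le_trans (ENNReal.toReal_mono (measure_ne_top _ _) (measure_mono hsub)) hMtail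
    · push_neg at hconst
      obtain ⟨i, hi⟩ := hconst
      have hsub : (fun t : ℝ => θ + fun _ => t) ⁻¹' Eᶜ = ∅ := by
        ext t
        simp only [hEdef, Set.mem_preimage, Set.mem_compl_iff, Set.mem_union, Set.mem_setOf_eq,
          Pi.add_apply, ne_eq, not_or, not_exists, not_not, not_lt, Set.mem_empty_iff_false,
          iff_false, not_and]
        intro h
        exact absurd (by linarith [h i] : θ i = θ 0) hi
      rw [hsub, measure_empty]
      simp only [ENNReal.toReal_zero]
      linarith
  have hsup : (⨆ θ ∈ {θ : Fin p → ℝ | C * Real.sqrt p ≤ l2norm θ},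
      (P θ {x | φ x = false}).toReal) ≤ η/2 :=
    Real.iSup_le (fun θ => Real.iSup_le (fun hθ => h2 θ hθ) (by linarith)) (by linarith)
  calc (P 0 {x | φ x = true}).toReal + ⨆ θ ∈ {θ : Fin p → ℝ | C * Real.sqrt p ≤ l2norm θ},
        (P θ {x | φ x = false}).toReal ≤ η/2 + η/2 := add_le_add h1 hsup
    _ = η := by ring

lemma lowerB (p : ℕ) (hp : 1 ≤ p) (η : ℝ) (hη0 : 0 < η) (hη1 : η < 1) :
    ∃ cη : ℝ, 0 < cη ∧ ∀ c : ℝ, 0 < c → c < cη →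
      1 - η ≤ minimaxRisk (fun θ : Fin p → ℝ => gaussianPi θ (Matrix.of fun _ _ => (1:ℝ)))
        {θ | c * Real.sqrt p ≤ l2norm θ} := by
  haveI : NeZero p := ⟨by omega⟩
  have hsp : (0:ℝ) < Real.sqrt p := Real.sqrt_pos.2 (by exact_mod_cast hp)
  have hT : ∀ θ : Fin p → ℝ, Measurable fun t : ℝ => θ + fun _ : Fin p => t :=
    fun θ => measurable_pi_lambda _ fun a => measurable_const.add measurable_id
  set P : (Fin p → ℝ) → Measure (Fin p → ℝ) :=
    fun θ => gaussianPi θ (Matrix.of fun _ _ => (1:ℝ)) with hPdef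
  have hP : ∀ θ, P θ = (gaussianReal 0 1).map (fun t => θ + fun _ => t) :=
    fun θ => gaussianPi_ones p hp θ
  have happly : ∀ (θ : Fin p → ℝ) (s : Set (Fin p → ℝ)), MeasurableSet s →
      P θ s = gaussianReal 0 1 ((fun t : ℝ => θ + fun _ : Fin p => t) ⁻¹' s) := by
    intro θ s hs
    rw [hP θ, Measure.map_apply (hT θ) hs]
  have hprob : ∀ θ, IsProbabilityMeasure (P θ) := by
    intro θ
    rw [hP θ]
    exact Measure.isProbabilityMeasure_map (hT θ).aemeasurable
  refine ⟨η, hη0, fun c hc0 hcη => ?_⟩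
  haveI : Nonempty {f : (Fin p → ℝ) → Bool // Measurable f} :=
    ⟨⟨fun _ => true, measurable_const⟩⟩
  refine le_ciInf ?_
  rintro ⟨φ, hφ⟩
  have hBm : MeasurableSet {x : Fin p → ℝ | φ x = true} := hφ (measurableSet_singleton true)
  have hBmf : MeasurableSet {x : Fin p → ℝ | φ x = false} := hφ (measurableSet_singleton false)
  have hu : Measurable fun t : ℝ => (fun _ : Fin p => t) :=
    measurable_pi_lambda _ fun _ => measurable_id
  set D : Set ℝ := {t : ℝ | φ (fun _ => t) = true} with hDdef
  have hD : MeasurableSet D := hu hBm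
  set θc : Fin p → ℝ := fun _ => c with hθcdef
  have hmem : θc ∈ {θ : Fin p → ℝ | c * Real.sqrt p ≤ l2norm θ} := by
    have hnorm : l2norm θc = c * Real.sqrt p := by
      unfold l2norm
      have hsum : ∑ _i : Fin p, c ^ 2 = (p : ℝ) * c ^ 2 := by
        simp [Finset.sum_const, Finset.card_univ, mul_comm]
      rw [hθcdef]
      simp only
      rw [hsum, mul_comm, Real.sqrt_mul (sq_nonneg _), Real.sqrt_sq hc0.le]
    simp only [Set.mem_setOf_eq, hnorm, le_refl]
  -- identify the two error terms
  have hzero : P 0 {x | φ x = true} = gaussianReal 0 1 D := by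
    rw [happly 0 _ hBm]
    congr 1
    ext t
    simp only [Set.mem_preimage, hDdef, Set.mem_setOf_eq]
    have : (0 : Fin p → ℝ) + (fun _ => t) = fun _ : Fin p => t := by
      funext i; simp
    rw [this]
  have hshift : P θc {x | φ x = false} = gaussianReal c 1 Dᶜ := by
    rw [happly θc _ hBmf]
    have hmapc := gaussianReal_map_const_add (μ := (0:ℝ)) (v := 1) c
    rw [zero_add] at hmapc
    rw [← hmapc, Measure.map_apply (measurable_const_add c) hD.compl]
    congr 1
    ext t
    simp only [Set.mem_preimage, Set.mem_compl_iff, hDdef, Set.mem_setOf_eq]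
    have : θc + (fun _ => t) = fun _ : Fin p => c + t := by
      funext i; simp [hθcdef]
    rw [this]
    simp
  have h4 : (gaussianReal c 1 D).toReal ≤ (gaussianReal 0 1 D).toReal + c/2 := by
    have hle := gauss_shift_le c hc0 hD
    calc (gaussianReal c 1 D).toReal
        ≤ (gaussianReal 0 1 D + ENNReal.ofReal (c/2)).toReal := by
          refine ENNReal.toReal_mono ?_ hle
          exact ENNReal.add_ne_top.mpr ⟨measure_ne_top _ _, ENNReal.ofReal_ne_top⟩
      _ = (gaussianReal 0 1 D).toReal + c/2 := by
          rw [ENNReal.toReal_add (measure_ne_top _ _) ENNReal.ofReal_ne_top,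
            ENNReal.toReal_ofReal (by linarith)]
  have h5 : (gaussianReal c 1 Dᶜ).toReal = 1 - (gaussianReal c 1 D).toReal := by
    rw [prob_compl_eq_one_sub hD,
      ENNReal.toReal_sub_of_le prob_le_one ENNReal.one_ne_top, ENNReal.toReal_one]
  have hsupge : (P θc {x | φ x = false}).toReal
      ≤ ⨆ θ ∈ {θ : Fin p → ℝ | c * Real.sqrt p ≤ l2norm θ},
          (P θ {x | φ x = false}).toReal := by
    have hone : ∀ θ (s : Set (Fin p → ℝ)), (P θ s).toReal ≤ 1 := by
      intro θ s
      have := hprob θ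
      rw [← ENNReal.toReal_one]
      exact ENNReal.toReal_mono ENNReal.one_ne_top prob_le_one
    have hb : BddAbove (Set.range fun θ : Fin p → ℝ =>
        ⨆ _ : θ ∈ {θ : Fin p → ℝ | c * Real.sqrt p ≤ l2norm θ},
          (P θ {x | φ x = false}).toReal) := by
      refine ⟨1, ?_⟩
      rintro r ⟨θ, rfl⟩
      exact Real.iSup_le (fun _ => hone θ _) zero_le_one
    have hle := le_ciSup hb θc
    rwa [ciSup_pos hmem] at hle
  have hfinal : 1 - η ≤ (P 0 {x | φ x = true}).toReal + (P θc {x | φ x = false}).toReal := by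
    rw [hzero, hshift, h5]
    have hD1 : (0:ℝ) ≤ (gaussianReal 0 1 D).toReal := ENNReal.toReal_nonneg
    linarith
  exact le_trans hfinal (add_le_add le_rfl hsupge)

end Main

theorem perfect_correlation_dense_rate
    (p : ℕ) (hp : 1 ≤ p) :
    (let P : (Fin p → ℝ) → Measure (Fin p → ℝ) := fun θ =>
      gaussianPi θ (Matrix.of fun _ _ => (1 : ℝ))
    let R : ℝ → ℝ := fun ε => minimaxRisk P {θ | ε ≤ l2norm θ}
    (∀ η : ℝ, 0 < η → η < 1 → ∃ Cη : ℝ, 0 < Cη ∧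
        ∀ C : ℝ, Cη < C → R (C * Real.sqrt p) ≤ η) ∧
      (∀ η : ℝ, 0 < η → η < 1 → ∃ cη : ℝ, 0 < cη ∧
        ∀ c : ℝ, 0 < c → c < cη → 1 - η ≤ R (c * Real.sqrt p))) := by
  intro P R
  exact ⟨fun η h1 h2 => upperB p hp η h1 h2, fun η h1 h2 => lowerB p hp η h1 h2⟩

end
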